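/- Define F : ℂ³ → ℂ by F(x,y,z) = x² + y² + z² − x·y·z − 2. The set of singular points of the surface {F = 2}, that is, the set of (x,y,z) ∈ ℂ³ with F(x,y,z) = 2 and 2x − yz = 2y − xz = 2z − xy = 0, equals exactly {(2,2,2), (2,−2,−2), (−2,2,−2), (−2,−2,2)}; moreover at each of these four points the Hessian matrix of F, namely [[2, −z, −y], [−z, 2, −x], [−y, −x, 2]], has nonzero determinant, so each singular point is an ordinary double point. -/

import Mathlib

/-- The singular points of the surface `{x² + y² + z² − xyz − 2 = 2} ⊂ ℂ³` are exactly
`(2,2,2), (2,−2,−2), (−2,2,−2), (−2,−2,2)`, and at each of them the Hessian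
`[[2,−z,−y],[−z,2,−x],[−y,−x,2]]` of `F` has nonzero determinant (ordinary double points). -/
theorem singular_points_t2 :
    {p : ℂ × ℂ × ℂ |
        p.1 ^ 2 + p.2.1 ^ 2 + p.2.2 ^ 2 - p.1 * p.2.1 * p.2.2 - 2 = 2 ∧
        2 * p.1 - p.2.1 * p.2.2 = 0 ∧
        2 * p.2.1 - p.1 * p.2.2 = 0 ∧
        2 * p.2.2 - p.1 * p.2.1 = 0}
      = {(2, 2, 2), (2, -2, -2), (-2, 2, -2), (-2, -2, 2)} ∧
    ∀ p ∈ ({(2, 2, 2), (2, -2, -2), (-2, 2, -2), (-2, -2, 2)} : Set (ℂ × ℂ × ℂ)),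
      (!![2, -p.2.2, -p.2.1; -p.2.2, 2, -p.1; -p.2.1, -p.1, 2] :
          Matrix (Fin 3) (Fin 3) ℂ).det ≠ 0 := by
  constructor
  · ext ⟨x, y, z⟩
    simp only [Set.mem_setOf_eq, Set.mem_insert_iff, Set.mem_singleton_iff, Prod.mk.injEq]
    constructor
    · rintro ⟨h0, h1, h2, h3⟩
      have e1 : x * y * z = 2 * x ^ 2 := by linear_combination (-x) * h1
      have e2 : x * y * z = 2 * y ^ 2 := by linear_combination (-y) * h2
      have e3 : x * y * z = 2 * z ^ 2 := by linear_combination (-z) * h3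
      have hx : (x - 2) * (x + 2) = 0 := by
        linear_combination h0 + (1/2 : ℂ) * e2 + (1/2 : ℂ) * e3
      have hy : (y - 2) * (y + 2) = 0 := by
        linear_combination h0 + (1/2 : ℂ) * e1 + (1/2 : ℂ) * e3
      have hz : (z - 2) * (z + 2) = 0 := by
        linear_combination h0 + (1/2 : ℂ) * e1 + (1/2 : ℂ) * e2
      have hx' : x = 2 ∨ x = -2 := by
        rcases mul_eq_zero.mp hx with h | h
        · exact Or.inl (sub_eq_zero.mp h)
        · exact Or.inr (eq_neg_of_add_eq_zero_left h)
      have hy' : y = 2 ∨ y = -2 := by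
        rcases mul_eq_zero.mp hy with h | h
        · exact Or.inl (sub_eq_zero.mp h)
        · exact Or.inr (eq_neg_of_add_eq_zero_left h)
      have hz' : z = 2 ∨ z = -2 := by
        rcases mul_eq_zero.mp hz with h | h
        · exact Or.inl (sub_eq_zero.mp h)
        · exact Or.inr (eq_neg_of_add_eq_zero_left h)
      rcases hx' with rfl | rfl <;> rcases hy' with rfl | rfl <;>
        rcases hz' with rfl | rfl <;> revert h1 h2 h3 <;> norm_num
    · rintro (⟨rfl, rfl, rfl⟩ | ⟨rfl, rfl, rfl⟩ | ⟨rfl, rfl, rfl⟩ | ⟨rfl, rfl, rfl⟩) <;>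
        norm_num
  · rintro p (rfl | rfl | rfl | rfl) <;>
      · simp [Matrix.det_fin_three]; norm_num
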